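/- If (X,λ_X) is a ditopological left unosemigroup, then its Hartman–Mycielski extension HM(X), with pointwise multiplication and left unit operation λ_{HM}(f)=λ_X∘f, is a ditopological left unosemigroup. -/

import Mathlib

open Topology

/-- Dicontinuity of a left unit operation `l` at `x`:
for every neighborhood `O` of `x` there are a neighborhood `U` of `x` and a
neighborhood `W` of `l x` in the subspace `l(S)` such that
`(W ⟍ U) ∩ l⁻¹(W) ⊆ O`, where `W ⟍ U = {z | ∃ w ∈ W, w * z ∈ U}`. -/
def LeftDicontAt {S : Type*} [TopologicalSpace S] (mul : S → S → S) (l : S → S) (x : S) : Prop :=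
  ∀ O ∈ 𝓝 x, ∃ U ∈ 𝓝 x, ∃ W ∈ 𝓝[Set.range l] (l x),
    W ⊆ Set.range l ∧ {z | l z ∈ W ∧ ∃ w ∈ W, mul w z ∈ U} ⊆ O

/-- Dicontinuity of a right unit operation `r` at `x`. -/
def RightDicontAt {S : Type*} [TopologicalSpace S] (mul : S → S → S) (r : S → S) (x : S) : Prop :=
  ∀ O ∈ 𝓝 x, ∃ U ∈ 𝓝 x, ∃ W ∈ 𝓝[Set.range r] (r x),
    W ⊆ Set.range r ∧ {z | r z ∈ W ∧ ∃ w ∈ W, mul z w ∈ U} ⊆ O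

/-- The half-open unit interval `[0,1)`, the domain of Hartman–Mycielski functions. -/
def Ico01 : Set ℝ := Set.Ico (0 : ℝ) 1

/-- `f : [0,1) → X` is a step function: there is a finite set of cut points such that
`f` is constant on each of the resulting intervals (i.e. `f x` depends only on which
cut points lie below `x`). -/
def IsStep {X : Type*} (f : ↥Ico01 → X) : Prop :=
  ∃ s : Finset ℝ, ∀ x y : ↥Ico01, (∀ c ∈ s, (c ≤ x.1 ↔ c ≤ y.1)) → f x = f y

/-- The Hartman–Mycielski extension of `X`: all step functions `[0,1) → X`. -/
def HM (X : Type*) := {f : ↥Ico01 → X // IsStep f}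

/-- Pointwise multiplication on `HM X`. -/
def hmMul {X : Type*} [Mul X] (f g : HM X) : HM X :=
  ⟨fun t => f.1 t * g.1 t, by
    obtain ⟨s, hs⟩ := f.2
    obtain ⟨u, hu⟩ := g.2
    exact ⟨s ∪ u, fun x y h => by
      show f.1 x * g.1 x = f.1 y * g.1 y
      rw [hs x y (fun c hc => h c (Finset.mem_union_left _ hc)),
        hu x y (fun c hc => h c (Finset.mem_union_right _ hc))]⟩⟩

/-- The pointwise extension `f ↦ u ∘ f` of a unary operation `u : X → X` to `HM X`. -/
def hmMap {X : Type*} (u : X → X) (f : HM X) : HM X :=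
  ⟨fun t => u (f.1 t), by
    obtain ⟨s, hs⟩ := f.2
    exact ⟨s, fun x y h => by show u (f.1 x) = u (f.1 y); rw [hs x y h]⟩⟩

/-- The Hartman–Mycielski topology on `HM X`, generated by the sets
`N(a,b,V,ε) = {g : |{t ∈ [a,b) : g(t) ∉ V}| < ε}` for `0 ≤ a < b ≤ 1`,
`V ⊆ X` open and `ε > 0` (`|·|` the Lebesgue measure). -/
def hmTop {X : Type*} [TopologicalSpace X] : TopologicalSpace (HM X) :=
  TopologicalSpace.generateFrom
    {N | ∃ (a b : ℝ) (V : Set X) (ε : ℝ), 0 ≤ a ∧ a < b ∧ b ≤ 1 ∧ IsOpen V ∧ 0 < ε ∧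
      N = {g : HM X | MeasureTheory.volume
        {t : ℝ | ∃ h : t ∈ Ico01, t ∈ Set.Ico a b ∧ g.1 ⟨t, h⟩ ∉ V} < ENNReal.ofReal ε}}


/-- Sub-basic set of the Hartman-Mycielski topology. -/
def hmN {X : Type*} (c d : ℝ) (V : Set X) (e : ℝ) : Set (HM X) :=
  {g : HM X | MeasureTheory.volume
    {t : ℝ | ∃ h : t ∈ Ico01, t ∈ Set.Ico c d ∧ g.1 ⟨t, h⟩ ∉ V} < ENNReal.ofReal e}

lemma hmN_isOpen {X : Type*} [TopologicalSpace X] (c d : ℝ) (V : Set X) (e : ℝ)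
    (h0 : 0 ≤ c) (hcd : c < d) (hd1 : d ≤ 1) (hV : IsOpen V) (he : 0 < e) :
    IsOpen[hmTop] (hmN c d V e) :=
  TopologicalSpace.GenerateOpen.basic _ ⟨c, d, V, e, h0, hcd, hd1, hV, he, rfl⟩

lemma mem_hmN {X : Type*} (c d : ℝ) (V : Set X) (e : ℝ) (he : 0 < e) (g : HM X)
    (hg : ∀ (t : ℝ) (h : t ∈ Ico01), t ∈ Set.Ico c d → g.1 ⟨t, h⟩ ∈ V) :
    g ∈ hmN c d V e := by
  have hempty : {t : ℝ | ∃ h : t ∈ Ico01, t ∈ Set.Ico c d ∧ g.1 ⟨t, h⟩ ∉ V} = ∅ := by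
    ext t
    simp only [Set.mem_setOf_eq, Set.mem_empty_iff_false, iff_false]
    rintro ⟨h, htcd, hV'⟩
    exact hV' (hg t h htcd)
  show MeasureTheory.volume _ < _
  rw [hempty, MeasureTheory.measure_empty]
  exact ENNReal.ofReal_pos.mpr he

set_option maxHeartbeats 1000000 in
/-- The Hartman–Mycielski extension of a ditopological left unosemigroup is a
ditopological left unosemigroup. -/
theorem hartmanMycielski_ditopological {X : Type*} [TopologicalSpace X] [Mul X]
    (hassoc : ∀ a b c : X, a * b * c = a * (b * c))
    (hmul : Continuous fun p : X × X => p.1 * p.2)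
    (l : X → X) (hl : Continuous l)
    (hunit : ∀ x : X, l x * x = x)
    (hdi : ∀ x : X, LeftDicontAt (· * ·) l x) :
    ∀ f : HM X, @LeftDicontAt (HM X) hmTop hmMul (hmMap l) f := by
  classical
  letI : TopologicalSpace (HM X) := hmTop
  intro f
  set 𝒮 : Set (Set (HM X)) :=
    {N | ∃ (a b : ℝ) (V : Set X) (ε : ℝ), 0 ≤ a ∧ a < b ∧ b ≤ 1 ∧ IsOpen V ∧ 0 < ε ∧
      N = {g : HM X | MeasureTheory.volume
        {t : ℝ | ∃ h : t ∈ Ico01, t ∈ Set.Ico a b ∧ g.1 ⟨t, h⟩ ∉ V} < ENNReal.ofReal ε}}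
    with h𝒮
  set P : Set (HM X) → Prop := fun O =>
    ∃ U ∈ 𝓝 f, ∃ W ∈ 𝓝[Set.range (hmMap l)] (hmMap l f),
      W ⊆ Set.range (hmMap l) ∧ {z | hmMap l z ∈ W ∧ ∃ w ∈ W, hmMul w z ∈ U} ⊆ O
    with hP
  have hmono : ∀ O O' : Set (HM X), O ⊆ O' → P O → P O' := by
    rintro O O' hOO' ⟨U, hU, W, hW, hWr, hsub⟩
    exact ⟨U, hU, W, hW, hWr, fun z hz => hOO' (hsub hz)⟩
  have huniv : P Set.univ :=
    ⟨Set.univ, Filter.univ_mem, Set.range (hmMap l), self_mem_nhdsWithin,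
      subset_refl _, fun _ _ => trivial⟩
  have hinter : ∀ O1 O2 : Set (HM X), P O1 → P O2 → P (O1 ∩ O2) := by
    rintro O1 O2 ⟨U1, hU1, W1, hW1, hW1r, h1⟩ ⟨U2, hU2, W2, hW2, hW2r, h2⟩
    refine ⟨U1 ∩ U2, Filter.inter_mem hU1 hU2, W1 ∩ W2, Filter.inter_mem hW1 hW2,
      fun x hx => hW1r hx.1, ?_⟩
    rintro z ⟨hlz, w, hwW, hwzU⟩
    exact ⟨h1 ⟨hlz.1, w, hwW.1, hwzU.1⟩, h2 ⟨hlz.2, w, hwW.2, hwzU.2⟩⟩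
  have hcore : ∀ (a b : ℝ) (V : Set X) (ε : ℝ), 0 ≤ a → a < b → b ≤ 1 → IsOpen V → 0 < ε →
      f ∈ hmN a b V ε → P (hmN a b V ε) := by
    intro a b V ε ha hab hb1 hV hε hfmem
    have hf : MeasureTheory.volume
        {t : ℝ | ∃ h : t ∈ Ico01, t ∈ Set.Ico a b ∧ f.1 ⟨t, h⟩ ∉ V} < ENNReal.ofReal ε := hfmem
    obtain ⟨s, hs⟩ := f.2
    set Pf : Finset ℝ := insert a (insert b (s.filter (fun c => a < c ∧ c < b))) with hPfdef
    have hPa : ∀ q ∈ Pf, a ≤ q := by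
      intro q hq
      rcases Finset.mem_insert.mp hq with h | h
      · exact h.ge
      rcases Finset.mem_insert.mp h with h | h
      · exact h ▸ hab.le
      · exact ((Finset.mem_filter.mp h).2.1).le
    set nxt : ℝ → ℝ :=
      fun p => (insert b (Pf.filter (fun q => p < q))).min' ⟨b, Finset.mem_insert_self _ _⟩
      with hnxtdef
    have hnxt_le : ∀ p : ℝ, nxt p ≤ b := fun p =>
      Finset.min'_le _ _ (Finset.mem_insert_self _ _)
    have hlt_nxt : ∀ p : ℝ, p < b → p < nxt p := by
      intro p hpb
      have hmem : nxt p ∈ insert b (Pf.filter (fun q => p < q)) :=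
        Finset.min'_mem (insert b (Pf.filter (fun q => p < q)))
          ⟨b, Finset.mem_insert_self _ _⟩
      rcases Finset.mem_insert.mp hmem with h | h
      · exact lt_of_lt_of_eq hpb h.symm
      · exact (Finset.mem_filter.mp h).2
    have hnxt_min : ∀ p q : ℝ, q ∈ Pf → p < q → nxt p ≤ q := fun p q hq hpq =>
      Finset.min'_le _ _ (Finset.mem_insert_of_mem (Finset.mem_filter.mpr ⟨hq, hpq⟩))
    have hcover : ∀ t : ℝ, a ≤ t → t < b → ∃ p ∈ Pf, p ≤ t ∧ t < nxt p := by
      intro t hat htb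
      have hane : (Pf.filter (fun q => q ≤ t)).Nonempty :=
        ⟨a, Finset.mem_filter.mpr ⟨Finset.mem_insert_self _ _, hat⟩⟩
      set p := (Pf.filter (fun q => q ≤ t)).max' hane with hpdef
      have hpmem := Finset.max'_mem _ hane
      have hpPf : p ∈ Pf := (Finset.mem_filter.mp hpmem).1
      have hpt : p ≤ t := (Finset.mem_filter.mp hpmem).2
      refine ⟨p, hpPf, hpt, ?_⟩
      by_contra hcon
      push_neg at hcon
      have hpb : p < b := lt_of_le_of_lt hpt htb
      have h1 : p < nxt p := hlt_nxt p hpb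
      have hmem : nxt p ∈ insert b (Pf.filter (fun q => p < q)) :=
        Finset.min'_mem (insert b (Pf.filter (fun q => p < q)))
          ⟨b, Finset.mem_insert_self _ _⟩
      rcases Finset.mem_insert.mp hmem with h | h
      · have hnb : nxt p = b := h
        rw [hnb] at hcon
        linarith
      · have h2 : nxt p ≤ p :=
          Finset.le_max' (Pf.filter (fun q => q ≤ t)) (nxt p)
            (Finset.mem_filter.mpr ⟨(Finset.mem_filter.mp h).1, hcon⟩)
        linarith
    have hmem01 : ∀ p ∈ Pf, p < b → p ∈ Ico01 := fun p hp hpb =>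
      ⟨le_trans ha (hPa p hp), lt_of_lt_of_le hpb hb1⟩
    set xval : ℝ → X :=
      fun p => if h : p ∈ Ico01 then f.1 ⟨p, h⟩ else f.1 ⟨0, ⟨le_refl 0, zero_lt_one⟩⟩
      with hxvaldef
    have hxval : ∀ (p : ℝ) (h : p ∈ Ico01), xval p = f.1 ⟨p, h⟩ := fun p h => dif_pos h
    have hconst : ∀ p ∈ Pf, p < b → ∀ (t : ℝ) (h : t ∈ Ico01), p ≤ t → t < nxt p →
        f.1 ⟨t, h⟩ = xval p := by
      intro p hp hpb t ht hpt htn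
      have hp01 := hmem01 p hp hpb
      rw [hxval p hp01]
      apply hs
      intro c hc
      by_cases h1 : c ≤ a
      · exact iff_of_true (h1.trans ((hPa p hp).trans hpt)) (h1.trans (hPa p hp))
      push_neg at h1
      by_cases h2 : b ≤ c
      · refine iff_of_false (fun hct => ?_) (fun hcp => ?_)
        · exact absurd (hct.trans_lt (htn.trans_le ((hnxt_le p).trans h2))) (lt_irrefl c)
        · exact absurd (hcp.trans_lt (hpb.trans_le h2)) (lt_irrefl c)
      push_neg at h2
      have hcPf : c ∈ Pf :=
        Finset.mem_insert_of_mem (Finset.mem_insert_of_mem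
          (Finset.mem_filter.mpr ⟨hc, h1, h2⟩))
      by_cases h3 : c ≤ p
      · exact iff_of_true (h3.trans hpt) h3
      push_neg at h3
      have h4 : nxt p ≤ c := hnxt_min p c hcPf h3
      exact iff_of_false (fun hct => absurd ((h4.trans hct).trans_lt htn) (lt_irrefl _))
        (fun hcp => absurd (h3.trans_le hcp) (lt_irrefl _))
    have hdikey : ∀ v : X, ∃ Uv Tv : Set X, IsOpen Uv ∧ IsOpen Tv ∧
        (v ∈ V → v ∈ Uv ∧ l v ∈ Tv ∧
          ∀ y : X, l y ∈ Tv → (∃ w, (w ∈ Tv ∧ w ∈ Set.range l) ∧ w * y ∈ Uv) → y ∈ V) := by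
      intro v
      by_cases hv : v ∈ V
      · obtain ⟨U, hU, W, hW, hWr, hsub⟩ := hdi v V (hV.mem_nhds hv)
        obtain ⟨U', hU'sub, hU'o, hvU'⟩ := mem_nhds_iff.mp hU
        obtain ⟨T', hT'o, hlvT', hT'sub⟩ := mem_nhdsWithin.mp hW
        refine ⟨U', T', hU'o, hT'o, fun _ => ⟨hvU', hlvT', ?_⟩⟩
        rintro y hly ⟨w, ⟨hwT, hwR⟩, hwy⟩
        exact hsub ⟨hT'sub ⟨hly, ⟨y, rfl⟩⟩, w, hT'sub ⟨hwT, hwR⟩, hU'sub hwy⟩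
      · exact ⟨Set.univ, Set.univ, isOpen_univ, isOpen_univ, fun h => absurd h hv⟩
    choose Uf Tf hUfo hTfo hkey using hdikey
    set G : Finset ℝ := Pf.filter (fun p => p < b ∧ xval p ∈ V) with hGdef
    have hGmem : ∀ p ∈ G, p ∈ Pf ∧ p < b ∧ xval p ∈ V := fun p hp => by
      have h := Finset.mem_filter.mp hp
      exact ⟨h.1, h.2.1, h.2.2⟩
    obtain ⟨r, hr0, hradd⟩ := ENNReal.lt_iff_exists_add_pos_lt.mp hf
    set δ : ℝ := (r : ℝ) / (3 * (G.card : ℝ) + 1) with hδdef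
    have hcard : (0:ℝ) < 3 * (G.card : ℝ) + 1 := by
      have := Nat.cast_nonneg (α := ℝ) G.card
      linarith
    have hδ : 0 < δ := div_pos (NNReal.coe_pos.mpr hr0) hcard
    have hq : δ * (3 * (G.card : ℝ) + 1) = (r : ℝ) := by
      rw [hδdef]
      exact div_mul_cancel₀ _ hcard.ne' 
    have hGiff : ∀ p : ℝ, p ∈ G ↔ p ∈ Pf ∧ (p < b ∧ xval p ∈ V) := fun p => Finset.mem_filter
    clear hGmem
    have hGmem : ∀ p ∈ G, p ∈ Pf ∧ p < b ∧ xval p ∈ V := fun p hp => by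
      have h := (hGiff p).mp hp
      exact ⟨h.1, h.2.1, h.2.2⟩
    clear hPfdef hnxtdef hxvaldef hGdef hδdef hs
    clear_value Pf nxt xval G δ
    set UU : Set (HM X) := ⋂ p ∈ G, hmN p (nxt p) (Uf (xval p)) δ with hUUdef
    set WW : Set (HM X) :=
      (⋂ p ∈ G, hmN p (nxt p) (Tf (xval p)) δ) ∩ Set.range (hmMap l) with hWWdef
    have hopen_cond : ∀ p ∈ G, 0 ≤ p ∧ p < nxt p ∧ nxt p ≤ 1 := by
      intro p hp
      obtain ⟨hpPf, hpb, _⟩ := hGmem p hp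
      exact ⟨ha.trans (hPa p hpPf), hlt_nxt p hpb, (hnxt_le p).trans hb1⟩
    have hUU𝓝 : UU ∈ 𝓝 f := by
      rw [hUUdef]
      refine (Filter.biInter_finset_mem G).mpr (fun p hp => ?_)
      obtain ⟨hpPf, hpb, hxv⟩ := hGmem p hp
      obtain ⟨h0p, hpn, hn1⟩ := hopen_cond p hp
      refine (hmN_isOpen p (nxt p) (Uf (xval p)) δ h0p hpn hn1 (hUfo _) hδ).mem_nhds ?_
      refine mem_hmN _ _ _ _ hδ f (fun t h ht => ?_)
      rw [hconst p hpPf hpb t h ht.1 ht.2]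
      exact (hkey (xval p) hxv).1
    have hWW𝓝 : WW ∈ 𝓝[Set.range (hmMap l)] (hmMap l f) := by
      rw [hWWdef]
      refine Filter.inter_mem (mem_nhdsWithin_of_mem_nhds ?_) self_mem_nhdsWithin
      refine (Filter.biInter_finset_mem G).mpr (fun p hp => ?_)
      obtain ⟨hpPf, hpb, hxv⟩ := hGmem p hp
      obtain ⟨h0p, hpn, hn1⟩ := hopen_cond p hp
      refine (hmN_isOpen p (nxt p) (Tf (xval p)) δ h0p hpn hn1 (hTfo _) hδ).mem_nhds ?_
      refine mem_hmN _ _ _ _ hδ (hmMap l f) (fun t h ht => ?_)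
      show l (f.1 ⟨t, h⟩) ∈ Tf (xval p)
      rw [hconst p hpPf hpb t h ht.1 ht.2]
      exact (hkey (xval p) hxv).2.1
    refine ⟨UU, hUU𝓝, WW, hWW𝓝, Set.inter_subset_right, ?_⟩
    rintro z ⟨hzW, w, hwW, hwzU⟩
    rw [hWWdef] at hzW hwW
    rw [hUUdef] at hwzU
    show MeasureTheory.volume _ < ENNReal.ofReal ε
    have hz1 : ∀ p ∈ G, MeasureTheory.volume
        {t : ℝ | ∃ h : t ∈ Ico01, t ∈ Set.Ico p (nxt p) ∧ (hmMap l z).1 ⟨t, h⟩ ∉ Tf (xval p)}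
        < ENNReal.ofReal δ := fun p hp => Set.mem_iInter₂.mp hzW.1 p hp
    have hw1 : ∀ p ∈ G, MeasureTheory.volume
        {t : ℝ | ∃ h : t ∈ Ico01, t ∈ Set.Ico p (nxt p) ∧ w.1 ⟨t, h⟩ ∉ Tf (xval p)}
        < ENNReal.ofReal δ := fun p hp => Set.mem_iInter₂.mp hwW.1 p hp
    have hwz1 : ∀ p ∈ G, MeasureTheory.volume
        {t : ℝ | ∃ h : t ∈ Ico01, t ∈ Set.Ico p (nxt p) ∧ (hmMul w z).1 ⟨t, h⟩ ∉ Uf (xval p)}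
        < ENNReal.ofReal δ := fun p hp => Set.mem_iInter₂.mp hwzU p hp
    have hsubset : {t : ℝ | ∃ h : t ∈ Ico01, t ∈ Set.Ico a b ∧ z.1 ⟨t, h⟩ ∉ V} ⊆
        {t : ℝ | ∃ h : t ∈ Ico01, t ∈ Set.Ico a b ∧ f.1 ⟨t, h⟩ ∉ V} ∪
        ⋃ p ∈ G,
          ({t : ℝ | ∃ h : t ∈ Ico01, t ∈ Set.Ico p (nxt p) ∧ (hmMap l z).1 ⟨t, h⟩ ∉ Tf (xval p)} ∪
           {t : ℝ | ∃ h : t ∈ Ico01, t ∈ Set.Ico p (nxt p) ∧ w.1 ⟨t, h⟩ ∉ Tf (xval p)} ∪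
           {t : ℝ | ∃ h : t ∈ Ico01, t ∈ Set.Ico p (nxt p) ∧ (hmMul w z).1 ⟨t, h⟩ ∉ Uf (xval p)}) := by
      rintro t ⟨h, htab, hzV⟩
      obtain ⟨p, hpPf, hpt, htn⟩ := hcover t htab.1 htab.2
      have hpb : p < b := lt_of_le_of_lt hpt htab.2
      by_cases hxv : xval p ∈ V
      · have hpG : p ∈ G := (hGiff p).mpr ⟨hpPf, hpb, hxv⟩
        right
        refine Set.mem_iUnion₂.mpr ⟨p, hpG, ?_⟩
        by_cases h1 : l (z.1 ⟨t, h⟩) ∈ Tf (xval p)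
        · by_cases h2 : w.1 ⟨t, h⟩ ∈ Tf (xval p)
          · by_cases h3 : w.1 ⟨t, h⟩ * z.1 ⟨t, h⟩ ∈ Uf (xval p)
            · exfalso
              apply hzV
              obtain ⟨v0, hv0⟩ := hwW.2
              have hwr : w.1 ⟨t, h⟩ ∈ Set.range l := ⟨v0.1 ⟨t, h⟩, by rw [← hv0]; rfl⟩
              exact (hkey (xval p) hxv).2.2 _ h1 ⟨w.1 ⟨t, h⟩, ⟨h2, hwr⟩, h3⟩
            · exact Or.inr ⟨h, ⟨hpt, htn⟩, h3⟩
          · exact Or.inl (Or.inr ⟨h, ⟨hpt, htn⟩, h2⟩)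
        · exact Or.inl (Or.inl ⟨h, ⟨hpt, htn⟩, h1⟩)
      · left
        refine ⟨h, htab, ?_⟩
        rw [hconst p hpPf hpb t h hpt htn]
        exact hxv
    have hsum_bound : G.card • (ENNReal.ofReal δ + ENNReal.ofReal δ + ENNReal.ofReal δ)
        ≤ (r : ENNReal) := by
      have h3 : ENNReal.ofReal δ + ENNReal.ofReal δ + ENNReal.ofReal δ
          = ENNReal.ofReal (δ + δ + δ) := by
        rw [ENNReal.ofReal_add (by linarith : (0:ℝ) ≤ δ + δ) hδ.le,
          ENNReal.ofReal_add hδ.le hδ.le]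
      rw [h3, nsmul_eq_mul, ← ENNReal.ofReal_natCast,
        ← ENNReal.ofReal_mul (Nat.cast_nonneg G.card), ← ENNReal.ofReal_coe_nnreal]
      apply ENNReal.ofReal_le_ofReal
      nlinarith [hδ.le, hq]
    calc MeasureTheory.volume {t : ℝ | ∃ h : t ∈ Ico01, t ∈ Set.Ico a b ∧ z.1 ⟨t, h⟩ ∉ V}
        ≤ MeasureTheory.volume
            {t : ℝ | ∃ h : t ∈ Ico01, t ∈ Set.Ico a b ∧ f.1 ⟨t, h⟩ ∉ V} +
          MeasureTheory.volume (⋃ p ∈ G,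
            ({t : ℝ | ∃ h : t ∈ Ico01, t ∈ Set.Ico p (nxt p) ∧ (hmMap l z).1 ⟨t, h⟩ ∉ Tf (xval p)} ∪
             {t : ℝ | ∃ h : t ∈ Ico01, t ∈ Set.Ico p (nxt p) ∧ w.1 ⟨t, h⟩ ∉ Tf (xval p)} ∪
             {t : ℝ | ∃ h : t ∈ Ico01, t ∈ Set.Ico p (nxt p) ∧ (hmMul w z).1 ⟨t, h⟩ ∉ Uf (xval p)})) :=
          le_trans (MeasureTheory.measure_mono hsubset) (MeasureTheory.measure_union_le _ _)
      _ ≤ MeasureTheory.volume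
            {t : ℝ | ∃ h : t ∈ Ico01, t ∈ Set.Ico a b ∧ f.1 ⟨t, h⟩ ∉ V} +
          ∑ p ∈ G, (ENNReal.ofReal δ + ENNReal.ofReal δ + ENNReal.ofReal δ) := by
          refine add_le_add (le_refl _) ?_
          refine le_trans (MeasureTheory.measure_biUnion_finset_le G _) (Finset.sum_le_sum ?_)
          intro p hp
          refine le_trans (MeasureTheory.measure_union_le _ _) ?_
          refine add_le_add (le_trans (MeasureTheory.measure_union_le _ _) ?_) (hwz1 p hp).le
          exact add_le_add (hz1 p hp).le (hw1 p hp).le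
      _ ≤ MeasureTheory.volume
            {t : ℝ | ∃ h : t ∈ Ico01, t ∈ Set.Ico a b ∧ f.1 ⟨t, h⟩ ∉ V} + (r : ENNReal) := by
          rw [Finset.sum_const]
          exact add_le_add (le_refl _) hsum_bound
      _ < ENNReal.ofReal ε := hradd
  have hcore' : ∀ N ∈ 𝒮, f ∈ N → P N := by
    rintro N ⟨a, b, V, ε, ha, hab, hb1, hV, hε, rfl⟩ hfN
    exact hcore a b V ε ha hab hb1 hV hε hfN
  intro O hO
  have hO' : O ∈ Filter.generate {t : Set (HM X) | f ∈ t ∧ t ∈ 𝒮} := by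
    rw [Filter.generate_eq_biInf, ← TopologicalSpace.nhds_generateFrom]
    exact hO
  obtain ⟨ts, hts, htsfin, htsub⟩ := Filter.mem_generate_iff.mp hO'
  have hPts : ts ⊆ {t : Set (HM X) | f ∈ t ∧ t ∈ 𝒮} → P (⋂₀ ts) := by
    refine Set.Finite.induction_on
      (motive := fun u _ => u ⊆ {t : Set (HM X) | f ∈ t ∧ t ∈ 𝒮} → P (⋂₀ u)) ts htsfin ?_ ?_
    · intro _
      rw [Set.sInter_empty]
      exact huniv
    · intro a0 u0 ha0 hu0 ih hsub
      rw [Set.sInter_insert]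
      have h0 := hsub (Set.mem_insert _ _)
      exact hinter _ _ (hcore' a0 h0.2 h0.1)
        (ih (fun x hx => hsub (Set.mem_insert_of_mem _ hx)))
  exact hmono _ _ htsub (hPts hts)
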